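/- Let σ(z) = max{0, z} (ReLU) and fix L, δ, R > 0. For any L-Lipschitz function f : ℝ → ℝ which is constant outside the interval [−R, R], there exist an integer w ≤ 3RL/δ, a scalar a, and scalars α_1, …, α_w, β_1, …, β_w with |α_i| ≤ 2L, such that the function h(x) = a + ∑_{i=1}^w α_i·σ(x − β_i) is L-Lipschitz and satisfies sup_{x∈ℝ} |f(x) − h(x)| ≤ δ. -/
import Mathlib

lemma relu_diff_mono (p q x y : ℝ) (hpq : p ≤ q) (hyx : y ≤ x) :
    max 0 (y-p) - max 0 (y-q) ≤ max 0 (x-p) - max 0 (x-q) := by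
  simp only [max_def]
  split_ifs <;> linarith

lemma relu_diff_lip (p q x y : ℝ) (hpq : p ≤ q) (hyx : y ≤ x) :
    (max 0 (x-p) - max 0 (x-q)) - (max 0 (y-p) - max 0 (y-q)) ≤ x - y := by
  simp only [max_def]
  split_ifs <;> linarith

lemma sharp_min {L m s d e : ℝ} (hL : 0 ≤ L) (hm : |m| ≤ L) (hd0 : 0 ≤ d) (hds : d ≤ s)
    (h1 : e ≤ (L - m) * d) (h2 : e ≤ (L + m) * (s - d)) : e ≤ L * s / 2 := by
  rcases abs_le.mp hm with ⟨hm1, hm2⟩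
  by_contra h
  push_neg at h
  have hs : 0 ≤ s := le_trans hd0 hds
  have he : 0 < e := lt_of_le_of_lt (by positivity) h
  have key : e * e ≤ ((L - m) * d) * ((L + m) * (s - d)) :=
    mul_le_mul h1 h2 he.le (mul_nonneg (by linarith) hd0)
  have k2 : ((L - m) * d) * ((L + m) * (s - d)) ≤ (L*s/2) * (L*s/2) := by
    nlinarith [mul_nonneg (mul_nonneg hL hL) (sq_nonneg (s - 2*d)),
      mul_nonneg (mul_self_nonneg m) (mul_nonneg hd0 (sub_nonneg.mpr hds))]
  have k3 : (L*s/2) * (L*s/2) < e * e := by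
    have h0 : 0 < e + L*s/2 := by positivity
    nlinarith [mul_pos (sub_pos.mpr h) h0]
  linarith

set_option maxHeartbeats 1000000 in
/-- ReLU approximation of Lipschitz functions: any `L`-Lipschitz `f` constant outside
`[−R,R]` is `δ`-approximated in sup norm by an `L`-Lipschitz function of the form
`x ↦ a + ∑_{i<w} α_i · max 0 (x − β_i)` with `w ≤ 3RL/δ` and `|α_i| ≤ 2L`. -/
theorem stmt6 (L δ R : ℝ) (hL : 0 < L) (hδ : 0 < δ) (hR : 0 < R)
    (f : ℝ → ℝ) (hf : ∀ x y, |f x - f y| ≤ L * |x - y|)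
    (hleft : ∀ x ≤ -R, f x = f (-R)) (hright : ∀ x, R ≤ x → f x = f R) :
    ∃ (w : ℕ) (a : ℝ) (α β : Fin w → ℝ),
      (w : ℝ) ≤ 3 * R * L / δ ∧
      (∀ i, |α i| ≤ 2 * L) ∧
      (∀ x y, |(a + ∑ i, α i * max 0 (x - β i)) - (a + ∑ i, α i * max 0 (y - β i))|
          ≤ L * |x - y|) ∧
      (∀ x, |f x - (a + ∑ i, α i * max 0 (x - β i))| ≤ δ) := by
  by_cases hcase : R * L < δ
  · -- constant approximation with w = 0
    refine ⟨0, (f (-R) + f R)/2, (fun _ => 0), (fun _ => 0), by norm_num; positivity,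
      fun i => i.elim0, ?_, ?_⟩
    · intro x y
      simp only [Finset.univ_eq_empty, Finset.sum_empty, add_zero, sub_self, abs_zero]
      positivity
    · intro x
      simp only [Finset.univ_eq_empty, Finset.sum_empty, add_zero]
      have eRR : |(-R : ℝ) - R| = 2*R := by rw [abs_of_nonpos (by linarith)]; ring
      rcases le_total x (-R) with hx | hx
      · rw [hleft x hx]
        have h1 := hf (-R) R
        rw [eRR] at h1
        rcases abs_le.mp h1 with ⟨h2, h3⟩
        rw [abs_le]; constructor <;> nlinarith
      rcases le_total R x with hx' | hx'
      · rw [hright x hx']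
        have h1 := hf R (-R)
        rw [show |R - -R| = 2*R by rw [abs_of_nonneg (by linarith)]; ring] at h1
        rcases abs_le.mp h1 with ⟨h2, h3⟩
        rw [abs_le]; constructor <;> nlinarith
      · have h1 := hf x (-R)
        have h2 := hf x R
        rw [show |x - -R| = x + R by rw [abs_of_nonneg (by linarith)]; ring] at h1
        rw [show |x - R| = R - x by rw [abs_of_nonpos (by linarith)]; ring] at h2
        rcases abs_le.mp h1 with ⟨h3, h4⟩
        rcases abs_le.mp h2 with ⟨h5, h6⟩
        rw [abs_le]; constructor <;> nlinarith
  · push_neg at hcase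
    have hRLδ : (1:ℝ) ≤ R * L / δ := (one_le_div hδ).mpr hcase
    set n : ℕ := ⌈R * L / δ⌉₊ with hn_def
    have hnR : R * L / δ ≤ (n:ℝ) := Nat.le_ceil _
    have hnR' : (n:ℝ) < R * L / δ + 1 := Nat.ceil_lt_add_one (by positivity)
    have hnpos : (0:ℝ) < (n:ℝ) := by linarith
    have hn0 : 0 < n := by exact_mod_cast hnpos
    set s : ℝ := 2 * R / n with hs_def
    have hspos : 0 < s := by positivity
    have hsδ : L * s ≤ 2 * δ := by
      have h1 : R * L ≤ (n:ℝ) * δ := by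
        have := (div_le_iff₀ hδ).mp hnR; linarith
      rw [hs_def, mul_div_assoc', div_le_iff₀ hnpos]
      nlinarith
    set t : ℕ → ℝ := fun i => -R + i * s with ht_def
    have htstep : ∀ i : ℕ, t (i+1) - t i = s := by
      intro i; simp only [ht_def]; push_cast; ring
    have htstep' : ∀ i : ℕ, t (i+1) = t i + s := fun i => by linarith [htstep i]
    have htmono : ∀ i j : ℕ, i ≤ j → t i ≤ t j := by
      intro i j hij
      simp only [ht_def]
      have : (i:ℝ) ≤ (j:ℝ) := by exact_mod_cast hij
      nlinarith
    have ht0 : t 0 = -R := by simp [ht_def]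
    have htn : t n = R := by
      have hne : (n:ℝ) ≠ 0 := ne_of_gt hnpos
      simp only [ht_def, hs_def]
      field_simp
      ring
    set c : ℕ → ℝ := fun i => if i < n then (f (t (i+1)) - f (t i)) / s else 0 with hc_def
    have hc : ∀ i, |c i| ≤ L := by
      intro i
      by_cases h : i < n
      · simp only [hc_def, if_pos h, abs_div, abs_of_pos hspos]
        rw [div_le_iff₀ hspos]
        have h1 := hf (t (i+1)) (t i)
        rwa [htstep i, abs_of_pos hspos] at h1
      · simp only [hc_def, if_neg h, abs_zero]; exact hL.le
    have hcs : ∀ i, i < n → c i * s = f (t (i+1)) - f (t i) := by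
      intro i h
      simp only [hc_def, if_pos h]
      field_simp
    set a : ℝ := f (-R) with ha_def
    set G : ℝ → ℝ := fun x =>
      a + ∑ i ∈ Finset.range n, c i * (max 0 (x - t i) - max 0 (x - t (i+1))) with hG_def
    have key : ∀ x : ℝ,
        (a + ∑ i : Fin (n+1), (c (i:ℕ) - (if (i:ℕ) = 0 then 0 else c ((i:ℕ) - 1)))
          * max 0 (x - t (i:ℕ))) = G x := by
      intro x
      rw [Fin.sum_univ_eq_sum_range
        (fun i => (c i - (if i = 0 then 0 else c (i - 1))) * max 0 (x - t i)) (n+1)]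
      simp only [sub_mul, Finset.sum_sub_distrib]
      rw [Finset.sum_range_succ (fun i => c i * max 0 (x - t i)) n]
      rw [Finset.sum_range_succ' (fun i => (if i = 0 then 0 else c (i - 1)) * max 0 (x - t i)) n]
      simp only [hG_def]
      have hcn : c n = 0 := by simp [hc_def]
      rw [hcn]
      simp only [Nat.succ_ne_zero, Nat.add_sub_cancel, if_false, if_true, zero_mul, add_zero,
        if_pos rfl]
      rw [← Finset.sum_sub_distrib]
      congr 1
      exact (Finset.sum_congr rfl fun i _ => by ring)
    -- Lipschitz property of G
    have lipG : ∀ x y : ℝ, y ≤ x → |G x - G y| ≤ L * (x - y) := by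
      intro x y hyx
      set u : ℕ → ℝ := fun i => (max 0 (x - t i) - max 0 (x - t (i+1)))
        - (max 0 (y - t i) - max 0 (y - t (i+1))) with hu_def
      have hG : G x - G y = ∑ i ∈ Finset.range n, c i * u i := by
        simp only [hG_def, hu_def]
        rw [add_sub_add_left_eq_sub, ← Finset.sum_sub_distrib]
        exact Finset.sum_congr rfl fun i _ => by ring
      have hu0 : ∀ i, 0 ≤ u i := fun i =>
        sub_nonneg.mpr (relu_diff_mono (t i) (t (i+1)) x y (by linarith [htstep i]) hyx)
      have habs : |∑ i ∈ Finset.range n, c i * u i| ≤ ∑ i ∈ Finset.range n, L * u i :=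
        (Finset.abs_sum_le_sum_abs _ _).trans (Finset.sum_le_sum fun i _ => by
          rw [abs_mul, abs_of_nonneg (hu0 i)]
          exact mul_le_mul_of_nonneg_right (hc i) (hu0 i))
      have hsum : ∑ i ∈ Finset.range n, u i
          = (max 0 (x - t 0) - max 0 (y - t 0)) - (max 0 (x - t n) - max 0 (y - t n)) := by
        rw [← Finset.sum_range_sub' (fun i => max 0 (x - t i) - max 0 (y - t i)) n]
        exact Finset.sum_congr rfl fun i _ => by simp only [hu_def]; ring
      have hsb : ∑ i ∈ Finset.range n, u i ≤ x - y := by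
        rw [hsum]
        have := relu_diff_lip (t 0) (t n) x y (by rw [ht0, htn]; linarith) hyx
        linarith
      calc |G x - G y| = |∑ i ∈ Finset.range n, c i * u i| := by rw [hG]
        _ ≤ ∑ i ∈ Finset.range n, L * u i := habs
        _ = L * ∑ i ∈ Finset.range n, u i := (Finset.mul_sum _ _ _).symm
        _ ≤ L * (x - y) := mul_le_mul_of_nonneg_left hsb hL.le
    -- error bound
    have errG : ∀ x : ℝ, |f x - G x| ≤ δ := by
      intro x
      rcases le_total x (-R) with hxl | hxl
      · have hGx : G x = a := by
          simp only [hG_def]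
          rw [Finset.sum_eq_zero, add_zero]
          intro i _
          have h1 : x - t i ≤ 0 := by
            have := htmono 0 i (Nat.zero_le i); rw [ht0] at this; linarith
          have h2 : x - t (i+1) ≤ 0 := by
            have := htmono 0 (i+1) (Nat.zero_le _); rw [ht0] at this; linarith
          rw [max_eq_left h1, max_eq_left h2, sub_zero, mul_zero]
        rw [hGx, hleft x hxl, ha_def, sub_self, abs_zero]
        exact hδ.le
      rcases le_total R x with hxr | hxr
      · have hGx : G x = f R := by
          simp only [hG_def]
          have : ∀ i ∈ Finset.range n, c i * (max 0 (x - t i) - max 0 (x - t (i+1)))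
              = f (t (i+1)) - f (t i) := by
            intro i hi
            rw [Finset.mem_range] at hi
            have h1 : 0 ≤ x - t i := by
              have := htmono i n hi.le; rw [htn] at this; linarith
            have h2 : 0 ≤ x - t (i+1) := by
              have := htmono (i+1) n hi; rw [htn] at this; linarith
            rw [max_eq_right h1, max_eq_right h2, show (x - t i) - (x - t (i+1)) = s by
              linarith [htstep i]]
            exact hcs i hi
          rw [Finset.sum_congr rfl this, Finset.sum_range_sub (fun i => f (t i)) n, ht0, htn]
          simp [ha_def]
        rw [hGx, hright x hxr, sub_self, abs_zero]
        exact hδ.le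
      · -- interior case
        set j : ℕ := min (⌊(x+R)/s⌋₊) (n-1) with hj_def
        have hjn : j < n := lt_of_le_of_lt (min_le_right _ _) (Nat.sub_lt hn0 one_pos)
        have htj : t j ≤ x := by
          have h0 : (0:ℝ) ≤ (x+R)/s := div_nonneg (by linarith) hspos.le
          have h1 : (j:ℝ) ≤ (x+R)/s := by
            refine le_trans ?_ (Nat.floor_le h0)
            exact_mod_cast min_le_left _ _
          have h2 : (j:ℝ) * s ≤ x + R := (le_div_iff₀ hspos).mp h1
          simp only [ht_def]; linarith
        have htj1 : x ≤ t (j+1) := by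
          rcases le_or_gt (⌊(x+R)/s⌋₊) (n-1) with hm | hm
          · have hj : j = ⌊(x+R)/s⌋₊ := min_eq_left hm
            have h1 : (x+R)/s < (⌊(x+R)/s⌋₊ : ℝ) + 1 := Nat.lt_floor_add_one _
            have h2 : x + R < ((j:ℝ) + 1) * s := by
              rw [hj]
              have := (div_lt_iff₀ hspos).mp h1
              push_cast at this ⊢
              linarith
            simp only [ht_def]; push_cast; linarith
          · have hj : j = n - 1 := min_eq_right hm.le
            have hj1 : j + 1 = n := by omega
            rw [hj1, htn]; exact hxr
        have hGx : G x = f (t j) + c j * (x - t j) := by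
          simp only [hG_def]
          rw [← Finset.sum_range_add_sum_Ico _ (Nat.succ_le_of_lt hjn)]
          have hIco : ∑ i ∈ Finset.Ico (j+1) n,
              c i * (max 0 (x - t i) - max 0 (x - t (i+1))) = 0 := by
            apply Finset.sum_eq_zero
            intro i hi
            rw [Finset.mem_Ico] at hi
            have h1 : x - t i ≤ 0 := by
              have := htmono (j+1) i hi.1; linarith
            have h2 : x - t (i+1) ≤ 0 := by
              have := htmono (j+1) (i+1) (by omega); linarith
            rw [max_eq_left h1, max_eq_left h2, sub_zero, mul_zero]
          rw [hIco, add_zero, Finset.sum_range_succ]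
          have hlt : ∀ i ∈ Finset.range j, c i * (max 0 (x - t i) - max 0 (x - t (i+1)))
              = f (t (i+1)) - f (t i) := by
            intro i hi
            rw [Finset.mem_range] at hi
            have h1 : 0 ≤ x - t i := by
              have := htmono i j hi.le; linarith
            have h2 : 0 ≤ x - t (i+1) := by
              have := htmono (i+1) j hi; linarith
            rw [max_eq_right h1, max_eq_right h2, show (x - t i) - (x - t (i+1)) = s by
              linarith [htstep i]]
            exact hcs i (lt_trans hi hjn)
          rw [Finset.sum_congr rfl hlt, Finset.sum_range_sub (fun i => f (t i)) j]
          rw [max_eq_right (by linarith : (0:ℝ) ≤ x - t j),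
            max_eq_left (by linarith : x - t (j+1) ≤ 0), sub_zero, ht0]
          simp only [ha_def]
          ring
        -- the pointwise estimate on [t j, t (j+1)]
        set d : ℝ := x - t j with hd_def
        have hd0 : 0 ≤ d := by simp only [hd_def]; linarith
        have hds : d ≤ s := by
          have := htstep' j; simp only [hd_def]; linarith
        have hfj := abs_le.mp ((hf x (t j)).trans_eq (by
          rw [abs_of_nonneg (by linarith : (0:ℝ) ≤ x - t j)]))
        have hfj1 := abs_le.mp ((hf x (t (j+1))).trans_eq (by
          rw [abs_of_nonpos (by linarith : x - t (j+1) ≤ 0),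
            show -(x - t (j+1)) = s - d from by simp only [hd_def]; linarith [htstep' j]]))
        have hft : f (t (j+1)) = f (t j) + c j * s := by
          have := hcs j hjn; linarith
        set e : ℝ := f x - G x with he_def
        have he1 : e ≤ (L - c j) * d := by
          simp only [he_def, hGx, hd_def]
          nlinarith [hfj.2]
        have he2 : e ≤ (L + c j) * (s - d) := by
          simp only [he_def, hGx]
          nlinarith [hfj1.2]
        have hne1 : -e ≤ (L - (- c j)) * d := by
          simp only [he_def, hGx, hd_def]
          nlinarith [hfj.1]
        have hne2 : -e ≤ (L + (- c j)) * (s - d) := by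
          simp only [he_def, hGx]
          nlinarith [hfj1.1]
        have hcj' : |(- c j)| ≤ L := by rw [abs_neg]; exact hc j
        have hb1 : e ≤ L * s / 2 := sharp_min hL.le (hc j) hd0 hds he1 he2
        have hb2 : -e ≤ L * s / 2 := sharp_min hL.le hcj' hd0 hds hne1 hne2
        rw [abs_le]
        constructor <;> [linarith; linarith]
    -- assemble
    refine ⟨n + 1, a, fun i => c (i:ℕ) - (if (i:ℕ) = 0 then 0 else c ((i:ℕ) - 1)),
      fun i => t (i:ℕ), ?_, ?_, ?_, ?_⟩
    · push_cast
      have h3 : 3 * R * L / δ = 3 * (R * L / δ) := by ring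
      rw [h3]; linarith
    · intro i
      dsimp only
      have h1 := hc (i:ℕ)
      split_ifs with h
      · rw [sub_zero]; exact h1.trans (by linarith)
      · calc |c (i:ℕ) - c ((i:ℕ)-1)| ≤ |c (i:ℕ)| + |c ((i:ℕ)-1)| := abs_sub _ _
          _ ≤ 2 * L := by have := hc ((i:ℕ)-1); linarith
    · intro x y
      rw [key x, key y]
      rcases le_total y x with h | h
      · rw [abs_of_nonneg (by linarith : (0:ℝ) ≤ x - y)]
        exact lipG x y h
      · rw [abs_sub_comm, abs_of_nonpos (by linarith : x - y ≤ 0)]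
        have := lipG y x h
        calc |G y - G x| ≤ L * (y - x) := lipG y x h
          _ = L * -(x - y) := by ring
    · intro x
      rw [key x]
      exact errG x
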